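/- arXiv:1908.03633 — 3 statements merged into one kernel-verified Lean document; each statement's English description precedes it below -/
import Mathlib

section
/- Let A be an m×n real matrix and set λ = 1/√(‖A‖² + 1), where ‖A‖ is the ℓ²-operator norm of A, and τ = 1/λ. Then the symmetric block matrix V = [[τ·I, 0, −Aᵀ], [0, τ·I, I], [−A, I, τ·I]] is positive semidefinite. -/
open Matrix

/-- The ℓ²-operator norm (spectral norm) of a real matrix: the operator norm of the
associated linear map between Euclidean spaces. -/
noncomputable def l2OpNorm {m n : ℕ} (A : Matrix (Fin m) (Fin n) ℝ) : ℝ :=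
  ‖LinearMap.toContinuousLinearMap (Matrix.toEuclideanLin A)‖

lemma aux_norm_sq {k : ℕ} (u : Fin k → ℝ) :
    u ⬝ᵥ u = ‖(WithLp.equiv 2 (Fin k → ℝ)).symm u‖ ^ 2 := by
  rw [← real_inner_self_eq_norm_sq]
  simp only [PiLp.inner_apply, Real.inner_apply, dotProduct]
  rfl

lemma aux_inner {k : ℕ} (u v : Fin k → ℝ) :
    u ⬝ᵥ v = inner ℝ ((WithLp.equiv 2 (Fin k → ℝ)).symm u)
      ((WithLp.equiv 2 (Fin k → ℝ)).symm v) := by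
  simp [PiLp.inner_apply, dotProduct, RCLike.inner_apply, mul_comm]

lemma aux_mulVec_bound {m n : ℕ} (A : Matrix (Fin m) (Fin n) ℝ) (u : Fin n → ℝ) :
    ‖(WithLp.equiv 2 (Fin m → ℝ)).symm (A *ᵥ u)‖ ≤
      l2OpNorm A * ‖(WithLp.equiv 2 (Fin n → ℝ)).symm u‖ := by
  have h : (WithLp.equiv 2 (Fin m → ℝ)).symm (A *ᵥ u) =
      LinearMap.toContinuousLinearMap (Matrix.toEuclideanLin A)
        ((WithLp.equiv 2 (Fin n → ℝ)).symm u) := by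
    simp [Matrix.toEuclideanLin_apply_piLp_toLp]
  rw [h]
  exact (LinearMap.toContinuousLinearMap (Matrix.toEuclideanLin A)).le_opNorm _

/-- **Boundary case of the Chen–Teboulle step-size condition.**
For an `m × n` real matrix `A`, with `λ = 1/√(‖A‖² + 1)` and `τ = 1/λ`, the symmetric
block matrix `V = [[τ·I, 0, −Aᵀ], [0, τ·I, I], [−A, I, τ·I]]` is positive semidefinite. -/
theorem chen_teboulle_boundary_posSemidef (m n : ℕ)
    (A : Matrix (Fin m) (Fin n) ℝ) (lam τ : ℝ)
    (hlam : lam = 1 / Real.sqrt (l2OpNorm A ^ 2 + 1)) (hτ : τ = 1 / lam) :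
    (Matrix.fromBlocks
        (Matrix.fromBlocks (τ • (1 : Matrix (Fin n) (Fin n) ℝ)) 0
          0 (τ • (1 : Matrix (Fin m) (Fin m) ℝ)))
        (Matrix.fromRows (-Aᵀ) (1 : Matrix (Fin m) (Fin m) ℝ))
        (Matrix.fromCols (-A) (1 : Matrix (Fin m) (Fin m) ℝ))
        (τ • (1 : Matrix (Fin m) (Fin m) ℝ))).PosSemidef := by
  set N := l2OpNorm A with hN
  have hN0 : 0 ≤ N := norm_nonneg _
  have hpos : 0 < Real.sqrt (N ^ 2 + 1) := Real.sqrt_pos.mpr (by positivity)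
  have hτval : τ = Real.sqrt (N ^ 2 + 1) := by
    rw [hτ, hlam, one_div_one_div]
  have hτsq : τ ^ 2 = N ^ 2 + 1 := by
    rw [hτval, Real.sq_sqrt (by positivity)]
  have hτ1 : 1 ≤ τ := by
    rw [hτval]
    nlinarith [Real.sq_sqrt (show (0:ℝ) ≤ N ^ 2 + 1 by positivity), hpos, hN0]
  refine Matrix.PosSemidef.of_dotProduct_mulVec_nonneg ?_ ?_
  · unfold Matrix.IsHermitian
    ext (i | i) (j | j) <;>
      · rcases i with i | i <;> try rcases j with j | j
        all_goals simp [Matrix.conjTranspose_apply, Matrix.fromBlocks,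
          Matrix.fromCols, Matrix.one_apply, Matrix.transpose_apply, eq_comm,
          Matrix.fromRows_apply_inl, Matrix.fromRows_apply_inr]
  · intro x
    set u : Fin n → ℝ := fun i => x (Sum.inl (Sum.inl i)) with hu
    set v : Fin m → ℝ := fun i => x (Sum.inl (Sum.inr i)) with hv
    set w : Fin m → ℝ := fun i => x (Sum.inr i) with hw
    have hx : x = Sum.elim (Sum.elim u v) w := by
      funext i; rcases i with (i | i) | i <;> rfl
    rw [hx]
    simp only [star_trivial, Matrix.fromBlocks_mulVec, Matrix.fromCols_mulVec_sumElim,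
      Matrix.fromRows_mulVec, Sum.elim_comp_inl, Sum.elim_comp_inr,
      sumElim_dotProduct_sumElim, Matrix.smul_mulVec, Matrix.one_mulVec,
      Matrix.zero_mulVec, add_zero, zero_add, Matrix.neg_mulVec,
      dotProduct_add, dotProduct_neg, dotProduct_smul, smul_eq_mul]
    set a := ‖(WithLp.equiv 2 (Fin n → ℝ)).symm u‖ with ha
    set b := ‖(WithLp.equiv 2 (Fin m → ℝ)).symm v‖ with hb
    set c := ‖(WithLp.equiv 2 (Fin m → ℝ)).symm w‖ with hc
    have ha0 : 0 ≤ a := norm_nonneg _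
    have hb0 : 0 ≤ b := norm_nonneg _
    have hc0 : 0 ≤ c := norm_nonneg _
    have huu : u ⬝ᵥ u = a ^ 2 := aux_norm_sq u
    have hvv : v ⬝ᵥ v = b ^ 2 := aux_norm_sq v
    have hww : w ⬝ᵥ w = c ^ 2 := aux_norm_sq w
    have hswap : u ⬝ᵥ (Aᵀ *ᵥ w) = (A *ᵥ u) ⬝ᵥ w := by
      rw [Matrix.dotProduct_mulVec, Matrix.vecMul_transpose]
    have hbound1 : |(A *ᵥ u) ⬝ᵥ w| ≤ N * a * c := by
      rw [aux_inner]
      calc |inner ℝ ((WithLp.equiv 2 (Fin m → ℝ)).symm (A *ᵥ u))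
              ((WithLp.equiv 2 (Fin m → ℝ)).symm w)|
          ≤ ‖(WithLp.equiv 2 (Fin m → ℝ)).symm (A *ᵥ u)‖ * c := abs_real_inner_le_norm _ _
        _ ≤ N * a * c := by
            have := aux_mulVec_bound A u
            exact mul_le_mul_of_nonneg_right this hc0
    have hbound2 : |v ⬝ᵥ w| ≤ b * c := by
      rw [aux_inner]
      exact abs_real_inner_le_norm _ _
    have h1 := abs_le.mp hbound1
    have h2 := abs_le.mp hbound2
    have hcomm : w ⬝ᵥ v = v ⬝ᵥ w := dotProduct_comm _ _
    have hcomm2 : w ⬝ᵥ (A *ᵥ u) = (A *ᵥ u) ⬝ᵥ w := dotProduct_comm _ _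
    rw [huu, hvv, hww, hswap, hcomm, hcomm2]
    nlinarith [sq_nonneg (τ * c - N * a - b), sq_nonneg (N * b - a), h1.1, h2.1,
      mul_nonneg (mul_nonneg hN0 ha0) hc0, mul_nonneg hb0 hc0, hτ1, hτsq]
end

section
/- Let A be an m×n real matrix with A ≠ 0, and let τy > 2 be a real number. Set τx = ‖A Aᵀ‖ (the ℓ²-operator norm of A Aᵀ) and τz = 1. Then the symmetric block matrix V = [[τx·I, 0, −Aᵀ], [0, τz·I, I], [−A, I, τy·I]] is positive definite. -/
open Matrix

section Aux

open scoped Matrix.Norms.L2Operator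

lemma aux_dot_eq_inner (k : ℕ) (v w : Fin k → ℝ) :
    v ⬝ᵥ w = inner ℝ ((EuclideanSpace.equiv (Fin k) ℝ).symm v)
      ((EuclideanSpace.equiv (Fin k) ℝ).symm w) := by
  simp [EuclideanSpace.inner_eq_star_dotProduct, dotProduct, mul_comm]

lemma aux_dot_eq_sq (k : ℕ) (v : Fin k → ℝ) :
    v ⬝ᵥ v = ‖(EuclideanSpace.equiv (Fin k) ℝ).symm v‖^2 := by
  rw [aux_dot_eq_inner, real_inner_self_eq_norm_sq]

lemma aux_key_AB (m n : ℕ) (A : Matrix (Fin m) (Fin n) ℝ) (x : Fin n → ℝ) (y : Fin m → ℝ) :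
    2 * ((A *ᵥ x) ⬝ᵥ y) ≤ ‖A‖^2 * (x ⬝ᵥ x) + y ⬝ᵥ y := by
  set ex := (EuclideanSpace.equiv (Fin n) ℝ).symm x
  set ey := (EuclideanSpace.equiv (Fin m) ℝ).symm y
  have h1 : (A *ᵥ x) ⬝ᵥ y ≤ (‖A‖ * ‖ex‖) * ‖ey‖ := by
    rw [aux_dot_eq_inner]
    calc inner ℝ ((EuclideanSpace.equiv (Fin m) ℝ).symm (A *ᵥ x)) ey
        ≤ ‖(EuclideanSpace.equiv (Fin m) ℝ).symm (A *ᵥ x)‖ * ‖ey‖ := real_inner_le_norm _ _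
      _ ≤ (‖A‖ * ‖ex‖) * ‖ey‖ := by
          have : ‖(EuclideanSpace.equiv (Fin m) ℝ).symm (A *ᵥ x)‖ ≤ ‖A‖ * ‖ex‖ :=
            Matrix.l2_opNorm_mulVec A ex
          have hn := norm_nonneg ey
          nlinarith [norm_nonneg ((EuclideanSpace.equiv (Fin m) ℝ).symm (A *ᵥ x))]
  have h2 : 2 * ((‖A‖ * ‖ex‖) * ‖ey‖) ≤ (‖A‖ * ‖ex‖)^2 + ‖ey‖^2 := by
    nlinarith [two_mul_le_add_sq (‖A‖ * ‖ex‖) ‖ey‖]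
  rw [aux_dot_eq_sq, aux_dot_eq_sq]
  nlinarith [norm_nonneg ex, norm_nonneg ey]

lemma aux_key_zy (k : ℕ) (z y : Fin k → ℝ) : 2 * (z ⬝ᵥ y) ≤ z ⬝ᵥ z + y ⬝ᵥ y := by
  have h1 : z ⬝ᵥ y ≤ ‖(EuclideanSpace.equiv (Fin k) ℝ).symm z‖ *
      ‖(EuclideanSpace.equiv (Fin k) ℝ).symm y‖ := by
    rw [aux_dot_eq_inner]; exact real_inner_le_norm _ _
  rw [aux_dot_eq_sq, aux_dot_eq_sq]
  nlinarith [two_mul_le_add_sq ‖(EuclideanSpace.equiv (Fin k) ℝ).symm z‖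
    ‖(EuclideanSpace.equiv (Fin k) ℝ).symm y‖]

lemma aux_dot_self_nonneg (k : ℕ) (v : Fin k → ℝ) : 0 ≤ v ⬝ᵥ v := by
  rw [aux_dot_eq_sq]; positivity

lemma aux_dot_self_pos (k : ℕ) (v : Fin k → ℝ) (hv : v ≠ 0) : 0 < v ⬝ᵥ v := by
  rw [aux_dot_eq_sq]
  have h : (EuclideanSpace.equiv (Fin k) ℝ).symm v ≠ 0 := by simpa using hv
  have := norm_pos_iff.mpr h
  positivity

lemma aux_quadform (m n : ℕ) (A : Matrix (Fin m) (Fin n) ℝ) (τx τz τy : ℝ)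
    (x : Fin n → ℝ) (z y : Fin m → ℝ) (hτz : τz = 1) :
    (Sum.elim (Sum.elim x z) y) ⬝ᵥ
      ((Matrix.fromBlocks
        (Matrix.fromBlocks (τx • (1 : Matrix (Fin n) (Fin n) ℝ)) 0
          0 (τz • (1 : Matrix (Fin m) (Fin m) ℝ)))
        (Matrix.fromRows (-Aᵀ) (1 : Matrix (Fin m) (Fin m) ℝ))
        (Matrix.fromCols (-A) (1 : Matrix (Fin m) (Fin m) ℝ))
        (τy • (1 : Matrix (Fin m) (Fin m) ℝ))) *ᵥ (Sum.elim (Sum.elim x z) y)) =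
    τx * (x ⬝ᵥ x) + z ⬝ᵥ z + τy * (y ⬝ᵥ y) - 2 * ((A *ᵥ x) ⬝ᵥ y) + 2 * (z ⬝ᵥ y) := by
  subst hτz
  simp [fromBlocks_mulVec, fromRows_mulVec, Matrix.fromCols_mulVec_sumElim,
    sumElim_dotProduct_sumElim, smul_mulVec, dotProduct_add, dotProduct_smul,
    dotProduct_neg, neg_mulVec, Matrix.dotProduct_mulVec, Matrix.vecMul_transpose]
  rw [← Matrix.dotProduct_mulVec y A x, dotProduct_comm y (A *ᵥ x), dotProduct_comm y z]
  ring

lemma aux_opnorm_sq (m n : ℕ) (A : Matrix (Fin m) (Fin n) ℝ) :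
    l2OpNorm (A * Aᵀ) = ‖A‖ * ‖A‖ := by
  have h0 : l2OpNorm (A * Aᵀ) = ‖A * Aᵀ‖ := rfl
  have h1 : A * Aᵀ = (Aᵀ)ᴴ * Aᵀ := by
    rw [show ((Aᵀ)ᴴ : Matrix (Fin m) (Fin n) ℝ) = Aᵀᵀ from rfl, transpose_transpose]
  rw [h0, h1, Matrix.l2_opNorm_conjTranspose_mul_self,
    show (Aᵀ : Matrix (Fin n) (Fin m) ℝ) = Aᴴ from rfl, Matrix.l2_opNorm_conjTranspose]

end Aux

open scoped Matrix.Norms.L2Operator in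
/-- **Unequal step-size parameters in the scaled-norm analysis.**
For a nonzero `m × n` real matrix `A` and `τy > 2`, with `τx = ‖A Aᵀ‖` (ℓ²-operator
norm) and `τz = 1`, the symmetric block matrix
`V = [[τx·I, 0, −Aᵀ], [0, τz·I, I], [−A, I, τy·I]]` is positive definite. -/
theorem chen_teboulle_unequal_steps_posDef (m n : ℕ)
    (A : Matrix (Fin m) (Fin n) ℝ) (hA : A ≠ 0)
    (τx τz τy : ℝ) (hτy : 2 < τy)
    (hτx : τx = l2OpNorm (A * Aᵀ)) (hτz : τz = 1) :
    (Matrix.fromBlocks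
        (Matrix.fromBlocks (τx • (1 : Matrix (Fin n) (Fin n) ℝ)) 0
          0 (τz • (1 : Matrix (Fin m) (Fin m) ℝ)))
        (Matrix.fromRows (-Aᵀ) (1 : Matrix (Fin m) (Fin m) ℝ))
        (Matrix.fromCols (-A) (1 : Matrix (Fin m) (Fin m) ℝ))
        (τy • (1 : Matrix (Fin m) (Fin m) ℝ))).PosDef := by
  have hA2 : τx = ‖A‖ * ‖A‖ := by rw [hτx, aux_opnorm_sq]
  have hApos : 0 < ‖A‖ := norm_pos_iff.mpr hA
  have hτx0 : 0 < τx := by rw [hA2]; positivity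
  refine posDef_iff_dotProduct_mulVec.mpr ⟨?_, ?_⟩
  · show _ᴴ = _
    simp [fromBlocks_transpose, transpose_fromRows, transpose_fromCols]
  · intro v hv
    set x : Fin n → ℝ := fun i => v (Sum.inl (Sum.inl i)) with hx
    set z : Fin m → ℝ := fun i => v (Sum.inl (Sum.inr i)) with hz
    set y : Fin m → ℝ := fun i => v (Sum.inr i) with hy
    have hdec : v = Sum.elim (Sum.elim x z) y := by
      funext i
      obtain (i | i) | i := i <;> rfl
    have hstar : star v = v := by
      funext i; simp
    rw [hstar, hdec, aux_quadform m n A τx τz τy x z y hτz]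
    by_cases hy0 : y = 0
    · have hxz : x ≠ 0 ∨ z ≠ 0 := by
        by_contra h
        push_neg at h
        apply hv
        rw [hdec, h.1, h.2, hy0]
        funext i
        obtain (i | i) | i := i <;> rfl
      rw [hy0]
      simp only [dotProduct_zero, zero_dotProduct, mulVec_zero, mul_zero, sub_zero, add_zero]
      rcases hxz with h | h
      · have := aux_dot_self_pos n x h
        have := aux_dot_self_nonneg m z
        nlinarith
      · have := aux_dot_self_pos m z h
        have := aux_dot_self_nonneg n x
        nlinarith
    · have h1 : 2 * ((A *ᵥ x) ⬝ᵥ y) ≤ τx * (x ⬝ᵥ x) + y ⬝ᵥ y := by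
        have := aux_key_AB m n A x y
        rw [sq] at this
        rw [hA2]
        exact this
      have h2 : 2 * ((-z) ⬝ᵥ y) ≤ (-z) ⬝ᵥ (-z) + y ⬝ᵥ y := aux_key_zy m (-z) y
      simp only [neg_dotProduct, dotProduct_neg, neg_neg] at h2
      have h3 := aux_dot_self_pos m y hy0
      nlinarith
end

section
/- Let E and F be real inner product spaces, A : E → F a continuous linear map with adjoint A*, and f : E → ℝ, g : F → ℝ functions. Suppose u is a subgradient of f at x, u' is a subgradient of f at x', v is a subgradient of g at z, and v' is a subgradient of g at z'. Then for all y, y' ∈ F: ⟪(u + A*y) − (u' + A*y'), x − x'⟫ + ⟪(v − y) − (v' − y'), z − z'⟫ + ⟪(z − Ax) − (z' − Ax'), y − y'⟫ ≥ 0. -/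
open RealInnerProductSpace

/-- `u` is a subgradient of `f` at `x`: `f w ≥ f x + ⟪u, w − x⟫` for all `w`. -/
def IsSubgradientAt {E : Type*} [NormedAddCommGroup E] [InnerProductSpace ℝ E]
    (f : E → ℝ) (u : E) (x : E) : Prop :=
  ∀ w : E, f x + ⟪u, w - x⟫ ≤ f w

/-- **Monotonicity of the primal–dual Kuhn–Tucker operator**
`𝒜(x, z, y) = (∂f(x) + A*y, ∂g(z) − y, z − Ax)` on `E × F × F`. -/
theorem kuhn_tucker_operator_monotone {E F : Type*}
    [NormedAddCommGroup E] [InnerProductSpace ℝ E] [CompleteSpace E]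
    [NormedAddCommGroup F] [InnerProductSpace ℝ F] [CompleteSpace F]
    (A : E →L[ℝ] F) (f : E → ℝ) (g : F → ℝ)
    (x x' u u' : E) (z z' v v' : F)
    (hu : IsSubgradientAt f u x) (hu' : IsSubgradientAt f u' x')
    (hv : IsSubgradientAt g v z) (hv' : IsSubgradientAt g v' z')
    (y y' : F) :
    0 ≤ ⟪(u + (ContinuousLinearMap.adjoint A) y) - (u' + (ContinuousLinearMap.adjoint A) y'),
          x - x'⟫
        + ⟪(v - y) - (v' - y'), z - z'⟫
        + ⟪(z - A x) - (z' - A x'), y - y'⟫ := by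
  have h1 := add_le_add (hu x') (hu' x)
  have h2 := add_le_add (hv z') (hv' z)
  simp only [inner_sub_left, inner_sub_right, inner_add_left,
    ContinuousLinearMap.adjoint_inner_left] at h1 h2 ⊢
  linarith [real_inner_comm (A x) y, real_inner_comm (A x') y,
    real_inner_comm (A x) y', real_inner_comm (A x') y',
    real_inner_comm z y, real_inner_comm z' y,
    real_inner_comm z y', real_inner_comm z' y']
end
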